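/- Converse Beck–Chevalley swap: if for every P in the fiber over the domain of g there is a cocartesian lift of g with domain P which is stable along k, then every Π-diagram over k is stable along g. -/

import Mathlib

open CategoryTheory CategoryTheory.Limits CategoryTheory.Functor

namespace FOHL

variable {𝒮 : Type*} {𝒳 : Type*} [Category 𝒮] [Category 𝒳]

variable (p : 𝒳 ⥤ 𝒮)

/-- A binary product diagram in the fiber of `p` over `S`. -/
structure IsFiberProductFan (S : 𝒮) {P Q T : 𝒳} (π₁ : T ⟶ P) (π₂ : T ⟶ Q) : Prop where
  lift₁ : p.IsHomLift (𝟙 S) π₁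
  lift₂ : p.IsHomLift (𝟙 S) π₂
  universal : ∀ {X : 𝒳} (u : X ⟶ P) (v : X ⟶ Q),
    p.IsHomLift (𝟙 S) u → p.IsHomLift (𝟙 S) v →
      ∃! w : X ⟶ T, p.IsHomLift (𝟙 S) w ∧ w ≫ π₁ = u ∧ w ≫ π₂ = v

/-- A binary coproduct diagram in the fiber of `p` over `S`. -/
structure IsFiberCoproductCofan (S : 𝒮) {P Q T : 𝒳} (ι₁ : P ⟶ T) (ι₂ : Q ⟶ T) : Prop where
  lift₁ : p.IsHomLift (𝟙 S) ι₁
  lift₂ : p.IsHomLift (𝟙 S) ι₂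
  universal : ∀ {X : 𝒳} (u : P ⟶ X) (v : Q ⟶ X),
    p.IsHomLift (𝟙 S) u → p.IsHomLift (𝟙 S) v →
      ∃! w : T ⟶ X, p.IsHomLift (𝟙 S) w ∧ ι₁ ≫ w = u ∧ ι₂ ≫ w = v

/-- A terminal object of the fiber of `p` over `S`. -/
structure IsFiberTerminal (S : 𝒮) (T : 𝒳) : Prop where
  obj_over : p.obj T = S
  universal : ∀ X : 𝒳, p.obj X = S → ∃! u : X ⟶ T, p.IsHomLift (𝟙 S) u

/-- An initial object of the fiber of `p` over `S`. -/
structure IsFiberInitial (S : 𝒮) (T : 𝒳) : Prop where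
  obj_over : p.obj T = S
  universal : ∀ X : 𝒳, p.obj X = S → ∃! u : T ⟶ X, p.IsHomLift (𝟙 S) u

/-- An exponential diagram in the fiber of `p` over `S`: `E` is the exponential `P ⟹ Q`,
`π₁ : W ⟶ E`, `π₂ : W ⟶ P` is a product fan exhibiting `W = E ∧ P`, and `ev : W ⟶ Q` is the
evaluation morphism. -/
structure IsFiberExponential (S : 𝒮) {P Q E W : 𝒳}
    (π₁ : W ⟶ E) (π₂ : W ⟶ P) (ev : W ⟶ Q) : Prop where
  fan : IsFiberProductFan p S π₁ π₂
  ev_lift : p.IsHomLift (𝟙 S) ev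
  universal : ∀ {X V : 𝒳} (ρ₁ : V ⟶ X) (ρ₂ : V ⟶ P), IsFiberProductFan p S ρ₁ ρ₂ →
    ∀ g : V ⟶ Q, p.IsHomLift (𝟙 S) g →
      ∃! h : X ⟶ E, p.IsHomLift (𝟙 S) h ∧
        ∀ m : V ⟶ W, p.IsHomLift (𝟙 S) m → m ≫ π₁ = ρ₁ ≫ h → m ≫ π₂ = ρ₂ →
          m ≫ ev = g

/-- Stability of fiberwise binary product diagrams under pullback along `f`. -/
def ProductsStableAlong {R S : 𝒮} (f : R ⟶ S) : Prop :=
  ∀ {P Q T P' Q' T' : 𝒳} (π₁ : T ⟶ P) (π₂ : T ⟶ Q)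
    (π₁' : T' ⟶ P') (π₂' : T' ⟶ Q') (cP : P' ⟶ P) (cQ : Q' ⟶ Q) (cT : T' ⟶ T),
    IsFiberProductFan p S π₁ π₂ →
    p.IsStronglyCartesian f cP → p.IsStronglyCartesian f cQ → p.IsStronglyCartesian f cT →
    p.IsHomLift (𝟙 R) π₁' → p.IsHomLift (𝟙 R) π₂' →
    π₁' ≫ cP = cT ≫ π₁ → π₂' ≫ cQ = cT ≫ π₂ →
    IsFiberProductFan p R π₁' π₂'

/-- Stability of fiberwise binary coproduct diagrams under pullback along `f`. -/
def CoproductsStableAlong {R S : 𝒮} (f : R ⟶ S) : Prop :=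
  ∀ {P Q T P' Q' T' : 𝒳} (ι₁ : P ⟶ T) (ι₂ : Q ⟶ T)
    (ι₁' : P' ⟶ T') (ι₂' : Q' ⟶ T') (cP : P' ⟶ P) (cQ : Q' ⟶ Q) (cT : T' ⟶ T),
    IsFiberCoproductCofan p S ι₁ ι₂ →
    p.IsStronglyCartesian f cP → p.IsStronglyCartesian f cQ → p.IsStronglyCartesian f cT →
    p.IsHomLift (𝟙 R) ι₁' → p.IsHomLift (𝟙 R) ι₂' →
    ι₁' ≫ cT = cP ≫ ι₁ → ι₂' ≫ cT = cQ ≫ ι₂ →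
    IsFiberCoproductCofan p R ι₁' ι₂'

/-- Stability of fiberwise exponential diagrams under pullback along `f`. -/
def ExponentialsStableAlong {R S : 𝒮} (f : R ⟶ S) : Prop :=
  ∀ {P Q E W P' Q' E' W' : 𝒳} (π₁ : W ⟶ E) (π₂ : W ⟶ P) (ev : W ⟶ Q)
    (π₁' : W' ⟶ E') (π₂' : W' ⟶ P') (ev' : W' ⟶ Q')
    (cE : E' ⟶ E) (cP : P' ⟶ P) (cQ : Q' ⟶ Q) (cW : W' ⟶ W),
    IsFiberExponential p S π₁ π₂ ev →
    p.IsStronglyCartesian f cE → p.IsStronglyCartesian f cP →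
    p.IsStronglyCartesian f cQ → p.IsStronglyCartesian f cW →
    p.IsHomLift (𝟙 R) π₁' → p.IsHomLift (𝟙 R) π₂' → p.IsHomLift (𝟙 R) ev' →
    π₁' ≫ cE = cW ≫ π₁ → π₂' ≫ cP = cW ≫ π₂ → ev' ≫ cQ = cW ≫ ev →
    IsFiberExponential p R π₁' π₂' ev'

/-- A `Π`-diagram over `f : R ⟶ S` based on `P` (with `P` in the fiber over `R`): a cartesian
morphism `c : X ⟶ Y` over `f` (so `X = f*Y`, `Y = Π_f P`) and a vertical evaluation morphism
`ε : X ⟶ P` which is universal: for every cartesian `c' : X' ⟶ Y'` over `f` and vertical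
`u : X' ⟶ P` there is a unique vertical `v : Y' ⟶ Y` whose pullback composed with `ε` is `u`. -/
structure IsPiDiagram {R S : 𝒮} (f : R ⟶ S) {P X Y : 𝒳} (c : X ⟶ Y) (ε : X ⟶ P) : Prop where
  cart : p.IsStronglyCartesian f c
  vert : p.IsHomLift (𝟙 R) ε
  universal : ∀ {X' Y' : 𝒳} (c' : X' ⟶ Y'), p.IsStronglyCartesian f c' →
    ∀ u : X' ⟶ P, p.IsHomLift (𝟙 R) u →
      ∃! v : Y' ⟶ Y, p.IsHomLift (𝟙 S) v ∧
        ∀ w : X' ⟶ X, p.IsHomLift (𝟙 R) w → w ≫ c = c' ≫ v → w ≫ ε = u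

/-- The Beck–Chevalley condition: stability of a `Π`-diagram over `g : Cc ⟶ D` along
`k : Bb ⟶ D`.  For every pullback square and every pullback of the diagram along the square,
the resulting diagram is again a `Π`-diagram. -/
def PiDiagramStableAlong {Cc D : 𝒮} (g : Cc ⟶ D) {P X Y : 𝒳} (c : X ⟶ Y) (ε : X ⟶ P)
    {Bb : 𝒮} (k : Bb ⟶ D) : Prop :=
  ∀ {A : 𝒮} (f : A ⟶ Bb) (h : A ⟶ Cc), IsPullback f h k g →
    ∀ {P' X' Y' : 𝒳} (cP : P' ⟶ P) (cX : X' ⟶ X) (cY : Y' ⟶ Y)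
      (q : X' ⟶ Y') (ε' : X' ⟶ P'),
      p.IsStronglyCartesian h cP → p.IsStronglyCartesian h cX → p.IsStronglyCartesian k cY →
      p.IsHomLift f q → q ≫ cY = cX ≫ c →
      p.IsHomLift (𝟙 A) ε' → ε' ≫ cP = cX ≫ ε →
      IsPiDiagram p f q ε'

/-- Stability of a cocartesian lift `t : P ⟶ Z` of `g : Cc ⟶ D` along `k : Bb ⟶ D`:
for every pullback square, the induced comparison morphism between the pullbacks is again
cocartesian. -/
def CocartesianStableAlong {Cc D : 𝒮} (g : Cc ⟶ D) {P Z : 𝒳} (t : P ⟶ Z)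
    {Bb : 𝒮} (k : Bb ⟶ D) : Prop :=
  ∀ {A : 𝒮} (f : A ⟶ Bb) (h : A ⟶ Cc), IsPullback f h k g →
    ∀ {P' Z' : 𝒳} (cP : P' ⟶ P) (cZ : Z' ⟶ Z) (m : P' ⟶ Z'),
      p.IsStronglyCartesian h cP → p.IsStronglyCartesian k cZ →
      p.IsHomLift f m → m ≫ cZ = cP ≫ t →
      p.IsStronglyCocartesian f m

end FOHL

open CategoryTheory CategoryTheory.Functor FOHL

/-- converse Beck–Chevalley swap. Let `p : 𝒳 ⥤ 𝒮` be a fibration and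
`g : C₀ ⟶ D`, `k : B₀ ⟶ D` morphisms of `𝒮`.  If for every `P` in the fiber over `C₀` there
is a cocartesian lift of `g` with domain `P` which is stable along `k`, then every
`Π`-diagram over `k` is stable along `g`. -/
theorem pi_stable_of_cocartesian_stable
    {𝒮 𝒳 : Type*} [Category 𝒮] [Category 𝒳] (p : 𝒳 ⥤ 𝒮) [p.IsFibered]
    {B₀ C₀ D : 𝒮} (g : C₀ ⟶ D) (k : B₀ ⟶ D)
    (hcocart : ∀ P : 𝒳, p.obj P = C₀ → ∃ (Z : 𝒳) (t : P ⟶ Z),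
      p.IsStronglyCocartesian g t ∧ CocartesianStableAlong p g t k) :
    ∀ {Q X Y : 𝒳} (c : X ⟶ Y) (ε : X ⟶ Q), IsPiDiagram p k c ε →
      PiDiagramStableAlong p k c ε g := by
  intro Q X Y c ε hPi
  intro A f h hpb P' X' Y' cP cX cY q ε' hcP hcX hcY hq hsq hε' hεsq
  haveI := hPi.cart
  haveI := hPi.vert
  haveI := hcP; haveI := hcX; haveI := hcY; haveI := hq; haveI := hε'
  -- `q` is strongly cartesian over `f`
  haveI hqcart : p.IsStronglyCartesian f q := by
    haveI : p.IsStronglyCartesian (f ≫ g) (q ≫ cY) := by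
      rw [hsq, hpb.w]; infer_instance
    exact IsStronglyCartesian.of_comp (p := p) (f := f) (g := g) (φ := q) (ψ := cY)
  refine ⟨hqcart, hε', ?_⟩
  intro X'' Y'' c'' hc'' u hu
  haveI := hc''; haveI := hu
  -- cocartesian lift of `g` with domain `Y''`
  obtain ⟨Z, t, ht, hstab⟩ := hcocart Y'' (IsHomLift.codomain_eq p f c'')
  haveI := ht
  -- cartesian lift of `k` with codomain `Z`
  obtain ⟨Z', cZ, hcZ⟩ :=
    IsPreFibered.exists_isCartesian p (IsHomLift.codomain_eq p g t) k
  haveI := hcZ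
  haveI hcZs : p.IsStronglyCartesian k cZ := inferInstance
  -- the comparison map `m : X'' ⟶ Z'` over `h`
  haveI : p.IsHomLift (h ≫ k) (c'' ≫ t) := hpb.w ▸ (IsHomLift.comp p f g c'' t)
  set m : X'' ⟶ Z' := IsStronglyCartesian.map p k cZ (f' := h ≫ k) rfl (c'' ≫ t) with hm
  have hmfac : m ≫ cZ = c'' ≫ t := IsStronglyCartesian.fac p k cZ rfl (c'' ≫ t)
  haveI hmlift : p.IsHomLift h m := IsStronglyCartesian.map_isHomLift p k cZ rfl (c'' ≫ t)
  haveI hmcocart : p.IsStronglyCocartesian h m :=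
    hstab h f hpb.flip c'' cZ m hc'' hcZs hmlift hmfac
  -- the vertical map `r : Z' ⟶ Q` induced by cocartesianity of `m`
  haveI : p.IsHomLift h (u ≫ cP) := inferInstance
  set r : Z' ⟶ Q := IsStronglyCocartesian.map p h m (Category.comp_id h).symm (u ≫ cP) with hr
  have hrfac : m ≫ r = u ≫ cP := IsStronglyCocartesian.fac p h m (Category.comp_id h).symm (u ≫ cP)
  haveI hrlift : p.IsHomLift (𝟙 B₀) r :=
    IsStronglyCocartesian.map_isHomLift p h m (Category.comp_id h).symm (u ≫ cP)
  -- apply the Π-property of the orignal diagram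
  obtain ⟨v₁, ⟨hv₁lift, hv₁prop⟩, hv₁uniq⟩ := hPi.universal cZ hcZs r hrlift
  haveI := hv₁lift
  -- descend `t ≫ v₁` through `cY` to get the desired map `v`
  haveI : p.IsHomLift g (t ≫ v₁) := inferInstance
  set v : Y'' ⟶ Y' := IsStronglyCartesian.map p g cY (Category.id_comp g).symm (t ≫ v₁) with hv
  have hvfac : v ≫ cY = t ≫ v₁ := IsStronglyCartesian.fac p g cY (Category.id_comp g).symm (t ≫ v₁)
  haveI hvlift : p.IsHomLift (𝟙 C₀) v :=
    IsStronglyCartesian.map_isHomLift p g cY (Category.id_comp g).symm (t ≫ v₁)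
  refine ⟨v, ⟨hvlift, ?_⟩, ?_⟩
  · -- `v` satisfies the compatibility property
    intro w hw hwq
    haveI := hw
    -- the vertical map `w₁ : Z' ⟶ X` induced by cocartesianity of `m`
    haveI : p.IsHomLift h (w ≫ cX) := inferInstance
    set w₁ : Z' ⟶ X := IsStronglyCocartesian.map p h m (Category.comp_id h).symm (w ≫ cX) with hw₁
    have hw₁fac : m ≫ w₁ = w ≫ cX :=
      IsStronglyCocartesian.fac p h m (Category.comp_id h).symm (w ≫ cX)
    haveI hw₁lift : p.IsHomLift (𝟙 B₀) w₁ :=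
      IsStronglyCocartesian.map_isHomLift p h m (Category.comp_id h).symm (w ≫ cX)
    have hkey : w₁ ≫ c = cZ ≫ v₁ := by
      refine IsStronglyCocartesian.ext p h m k
        (ψ := w₁ ≫ c) (ψ' := cZ ≫ v₁) ?_
      calc m ≫ w₁ ≫ c = (m ≫ w₁) ≫ c := by rw [Category.assoc]
        _ = w ≫ cX ≫ c := by rw [hw₁fac, Category.assoc]
        _ = w ≫ q ≫ cY := by rw [← hsq]
        _ = (w ≫ q) ≫ cY := by rw [Category.assoc]
        _ = (c'' ≫ v) ≫ cY := by rw [hwq]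
        _ = c'' ≫ t ≫ v₁ := by rw [Category.assoc, hvfac]
        _ = (c'' ≫ t) ≫ v₁ := by rw [Category.assoc]
        _ = m ≫ cZ ≫ v₁ := by rw [← hmfac, Category.assoc]
    have hε₁ : w₁ ≫ ε = r := hv₁prop w₁ hw₁lift hkey
    refine IsStronglyCartesian.ext p h cP (𝟙 A)
      (ψ := w ≫ ε') (ψ' := u) ?_
    calc (w ≫ ε') ≫ cP = w ≫ ε' ≫ cP := by rw [Category.assoc]
      _ = w ≫ cX ≫ ε := by rw [hεsq]
      _ = (m ≫ w₁) ≫ ε := by rw [hw₁fac, Category.assoc]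
      _ = m ≫ r := by rw [Category.assoc, hε₁]
      _ = u ≫ cP := hrfac
  · -- uniqueness
    intro v' ⟨hv'lift, hv'prop⟩
    haveI := hv'lift
    -- descend `v' ≫ cY` through `t` to get `s : Z ⟶ Y`
    haveI : p.IsHomLift g (v' ≫ cY) := inferInstance
    set s : Z ⟶ Y := IsStronglyCocartesian.map p g t (Category.comp_id g).symm (v' ≫ cY) with hs
    have hsfac : t ≫ s = v' ≫ cY := IsStronglyCocartesian.fac p g t (Category.comp_id g).symm (v' ≫ cY)
    haveI hslift : p.IsHomLift (𝟙 D) s :=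
      IsStronglyCocartesian.map_isHomLift p g t (Category.comp_id g).symm (v' ≫ cY)
    have hsv₁ : s = v₁ := by
      refine hv₁uniq s ⟨hslift, ?_⟩
      intro w' hw' heq
      haveI := hw'
      -- the vertical map `w₀ : X'' ⟶ X'` induced by cartesianity of `cX`
      haveI : p.IsHomLift h (m ≫ w') := inferInstance
      set w₀ : X'' ⟶ X' := IsStronglyCartesian.map p h cX (Category.id_comp h).symm (m ≫ w') with hw₀
      have hw₀fac : w₀ ≫ cX = m ≫ w' :=
        IsStronglyCartesian.fac p h cX (Category.id_comp h).symm (m ≫ w')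
      haveI hw₀lift : p.IsHomLift (𝟙 A) w₀ :=
        IsStronglyCartesian.map_isHomLift p h cX (Category.id_comp h).symm (m ≫ w')
      have hw₀q : w₀ ≫ q = c'' ≫ v' := by
        refine IsStronglyCartesian.ext p g cY f
          (ψ := w₀ ≫ q) (ψ' := c'' ≫ v') ?_
        calc (w₀ ≫ q) ≫ cY = w₀ ≫ q ≫ cY := by rw [Category.assoc]
          _ = (w₀ ≫ cX) ≫ c := by rw [hsq, Category.assoc]
          _ = m ≫ w' ≫ c := by rw [hw₀fac, Category.assoc]
          _ = (m ≫ cZ) ≫ s := by simp [heq]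
          _ = c'' ≫ t ≫ s := by rw [hmfac, Category.assoc]
          _ = (c'' ≫ v') ≫ cY := by rw [hsfac, Category.assoc]
      have hε₀ : w₀ ≫ ε' = u := hv'prop w₀ hw₀lift hw₀q
      refine IsStronglyCocartesian.ext p h m (𝟙 B₀)
        (ψ := w' ≫ ε) (ψ' := r) ?_
      calc m ≫ w' ≫ ε = (m ≫ w') ≫ ε := by rw [Category.assoc]
        _ = w₀ ≫ cX ≫ ε := by rw [← Category.assoc, hw₀fac]
        _ = (w₀ ≫ ε') ≫ cP := by rw [← hεsq, Category.assoc]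
        _ = u ≫ cP := by rw [hε₀]
        _ = m ≫ r := hrfac.symm
    have : v' ≫ cY = t ≫ v₁ := by rw [hsfac.symm, hsv₁]
    exact IsStronglyCartesian.map_uniq p g cY (Category.id_comp g).symm (t ≫ v₁) v' this
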